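/- Let k be a field of characteristic zero and m a Lie algebra over k. In L₊(m) set D_{a,b} := (1/2)(ad_{[a,b]} + [ad_a, ad_b]) for a, b ∈ m, where ad_z for z ∈ m denotes the image of the generator corresponding to z. Then I_M := span_k{ ad_{[a,b]} − D_{a,b} : a, b ∈ m } and I_L := span_k{ ad_{[a,b]} + 2·D_{a,b} : a, b ∈ m } are Lie ideals of L₊(m), and [I_M, I_L] = 0. -/

import Mathlib

namespace LplusDef

variable (k : Type*) [Field k] (m : Type*) [LieRing m] [LieAlgebra k m]

/-- The set of relations defining `L₊(m)` inside the free Lie algebra on (the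
underlying type of) `m`: linearity of the generators `ad`, and
`[[ad_a, ad_b], ad_c] + [ad_[a,b], ad_c] - ad_([[a,b],c] + [[a,c],b] + [a,[b,c]])`. -/
def relSet : Set (FreeLieAlgebra k m) :=
  {x | ∃ (α β : k) (a b : m),
      x = FreeLieAlgebra.of k (α • a + β • b)
          - α • FreeLieAlgebra.of k a - β • FreeLieAlgebra.of k b} ∪
  {x | ∃ a b c : m,
      x = ⁅⁅FreeLieAlgebra.of k a, FreeLieAlgebra.of k b⁆, FreeLieAlgebra.of k c⁆
          + ⁅FreeLieAlgebra.of k ⁅a, b⁆, FreeLieAlgebra.of k c⁆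
          - FreeLieAlgebra.of k (⁅⁅a, b⁆, c⁆ + ⁅⁅a, c⁆, b⁆ + ⁅a, ⁅b, c⁆⁆)}

/-- The Lie ideal of the free Lie algebra generated by the relations. -/
noncomputable def relIdeal : LieIdeal k (FreeLieAlgebra k m) :=
  LieSubmodule.lieSpan k (FreeLieAlgebra k m) (relSet k m)

/-- `L₊(m)`: the quotient of the free Lie algebra on `m` by the relations ideal. -/
abbrev Lplus := FreeLieAlgebra k m ⧸ relIdeal k m

/-- `ad_a`: the image in `L₊(m)` of the generator corresponding to `a : m`. -/
noncomputable def adgen (a : m) : Lplus k m :=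
  LieSubmodule.Quotient.mk' (relIdeal k m) (FreeLieAlgebra.of k a)

end LplusDef

namespace LplusProof

open LplusDef

/-- Jacobi identity, left-bracketed cyclic form. -/
lemma jac3 {L : Type*} [LieRing L] (x y z : L) :
    ⁅⁅x, y⁆, z⁆ + ⁅⁅y, z⁆, x⁆ + ⁅⁅z, x⁆, y⁆ = 0 := by
  have h1 := lie_lie x y z
  have h2 := lie_lie y z x
  have h3 := lie_lie z x y
  have j := lie_jacobi x y z
  have s1 : ⁅y, ⁅x, z⁆⁆ = -⁅y, ⁅z, x⁆⁆ := by rw [← lie_neg, lie_skew]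
  have s2 : ⁅z, ⁅y, x⁆⁆ = -⁅z, ⁅x, y⁆⁆ := by rw [← lie_neg, lie_skew]
  have s3 : ⁅x, ⁅z, y⁆⁆ = -⁅x, ⁅y, z⁆⁆ := by rw [← lie_neg, lie_skew]
  rw [h1, h2, h3, s1, s2, s3, eq_neg_of_add_eq_zero_right j]
  abel

variable {k : Type*} [Field k] {m : Type*} [LieRing m] [LieAlgebra k m]

lemma mk_relSet_eq_zero {x : FreeLieAlgebra k m} (hx : x ∈ relSet k m) :
    LieSubmodule.Quotient.mk' (relIdeal k m) x = 0 :=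
  (LieSubmodule.Quotient.mk_eq_zero _).2 (LieSubmodule.subset_lieSpan hx)

lemma adgen_lin (α β : k) (a b : m) :
    adgen k m (α • a + β • b) = α • adgen k m a + β • adgen k m b := by
  have h := mk_relSet_eq_zero (k := k) (m := m) (Or.inl ⟨α, β, a, b, rfl⟩)
  rw [map_sub, map_sub, map_smul,
    map_smul, sub_sub, sub_eq_zero] at h
  simpa [adgen] using h

lemma adgen_add (a b : m) : adgen k m (a + b) = adgen k m a + adgen k m b := by
  simpa using adgen_lin (1 : k) 1 a b

lemma adgen_smul (α : k) (a : m) : adgen k m (α • a) = α • adgen k m a := by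
  simpa using adgen_lin α (0 : k) a a

lemma adgen_neg (a : m) : adgen k m (-a) = -adgen k m a := by
  simpa using adgen_smul (-1 : k) a

lemma adgen_zero : adgen k m (0 : m) = 0 := by
  simpa using adgen_smul (0 : k) (0 : m)

lemma adgen_rel (a b c : m) :
    ⁅⁅adgen k m a, adgen k m b⁆, adgen k m c⁆ + ⁅adgen k m ⁅a, b⁆, adgen k m c⁆
      = adgen k m (⁅⁅a, b⁆, c⁆ + ⁅⁅a, c⁆, b⁆ + ⁅a, ⁅b, c⁆⁆) := by
  have h := mk_relSet_eq_zero (k := k) (m := m) (Or.inr ⟨a, b, c, rfl⟩)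
  rw [map_sub, map_add, sub_eq_zero] at h
  exact h

lemma adgen_rel2 (a b c : m) :
    ⁅⁅adgen k m a, adgen k m b⁆, adgen k m c⁆ + ⁅adgen k m ⁅a, b⁆, adgen k m c⁆
      = adgen k m ⁅⁅a, b⁆, c⁆ + adgen k m ⁅⁅a, b⁆, c⁆ := by
  rw [adgen_rel]
  have hs : ⁅b, ⁅a, c⁆⁆ = -⁅⁅a, c⁆, b⁆ := (lie_skew _ _).symm
  have hm : (⁅⁅a, b⁆, c⁆ + ⁅⁅a, c⁆, b⁆ + ⁅a, ⁅b, c⁆⁆ : m) = ⁅⁅a, b⁆, c⁆ + ⁅⁅a, b⁆, c⁆ := by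
    rw [leibniz_lie a b c, hs]; abel
  rw [hm, adgen_add]

/-- The quotient map onto `L₊(m)` as a morphism of Lie algebras. -/
noncomputable def qmap (k : Type*) [Field k] (m : Type*) [LieRing m] [LieAlgebra k m] :
    FreeLieAlgebra k m →ₗ⁅k⁆ Lplus k m :=
  { (LieSubmodule.Quotient.mk' (relIdeal k m)).toLinearMap with
    map_lie' := rfl }

lemma qmap_apply (x : FreeLieAlgebra k m) :
    qmap k m x = LieSubmodule.Quotient.mk' (relIdeal k m) x := rfl

/-- The free Lie algebra is generated by its generators. -/
lemma free_mem (U : LieSubalgebra k (FreeLieAlgebra k m))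
    (hU : ∀ a : m, FreeLieAlgebra.of k a ∈ U) (z : FreeLieAlgebra k m) : z ∈ U := by
  let f : FreeLieAlgebra k m →ₗ⁅k⁆ U :=
    FreeLieAlgebra.lift k fun a => ⟨FreeLieAlgebra.of k a, hU a⟩
  have h1 : (U.incl.comp f) ∘ FreeLieAlgebra.of k = FreeLieAlgebra.of k := by
    funext a
    simp [f, LieHom.comp_apply, FreeLieAlgebra.lift_of_apply]
  have h2 : (LieHom.id : FreeLieAlgebra k m →ₗ⁅k⁆ FreeLieAlgebra k m) ∘ FreeLieAlgebra.of k
      = FreeLieAlgebra.of k := rfl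
  have h3 : U.incl.comp f = LieHom.id := by
    rw [(FreeLieAlgebra.lift_unique _ _).mp h1, (FreeLieAlgebra.lift_unique _ _).mp h2]
  have h4 : U.incl (f z) = z := by
    have := congrArg (fun g : FreeLieAlgebra k m →ₗ⁅k⁆ FreeLieAlgebra k m => g z) h3
    simpa using this
  rw [← h4]
  exact (f z).2

/-- `L₊(m)` is generated as a Lie algebra by the `adgen`s. -/
lemma mem_of_adgen_mem (T : LieSubalgebra k (Lplus k m))
    (hT : ∀ a : m, adgen k m a ∈ T) (y : Lplus k m) : y ∈ T := by
  obtain ⟨z, rfl⟩ := LieSubmodule.Quotient.surjective_mk' (relIdeal k m) y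
  have hz : z ∈ LieSubalgebra.comap (qmap k m) T :=
    free_mem _ (fun a => by
      show qmap k m (FreeLieAlgebra.of k a) ∈ T
      exact hT a) z
  exact hz

/-- A submodule stable under bracketing with all generators is a Lie ideal. -/
lemma lie_mem_of_adgen_stable (S : Submodule k (Lplus k m))
    (hS : ∀ c : m, ∀ x ∈ S, ⁅adgen k m c, x⁆ ∈ S) :
    ∀ y : Lplus k m, ∀ x ∈ S, ⁅y, x⁆ ∈ S := by
  let T : LieSubalgebra k (Lplus k m) :=
    { carrier := {y | ∀ x ∈ S, ⁅y, x⁆ ∈ S}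
      add_mem' := fun {y z} hy hz x hx => by
        rw [add_lie]; exact S.add_mem (hy x hx) (hz x hx)
      zero_mem' := fun x hx => by rw [zero_lie]; exact S.zero_mem
      smul_mem' := fun t y hy x hx => by rw [smul_lie]; exact S.smul_mem t (hy x hx)
      lie_mem' := fun {y z} hy hz x hx => by
        rw [lie_lie]; exact S.sub_mem (hy _ (hz x hx)) (hz _ (hy x hx)) }
  intro y
  exact mem_of_adgen_mem T (fun a => hS a) y

end LplusProof

open LplusDef LplusProof in
/-- for a Lie algebra `m`, with `D_{a,b} = (1/2)(ad_[a,b] + [ad_a, ad_b])`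
in `L₊(m)`, the spans `I_M = span{ad_[a,b] - D_{a,b}}` and
`I_L = span{ad_[a,b] + 2 D_{a,b}}` are Lie ideals of `L₊(m)` and `[I_M, I_L] = 0`. -/
theorem spans_are_ideals_and_commute
    (k : Type*) [Field k] [CharZero k]
    (m : Type*) [LieRing m] [LieAlgebra k m]
    (D : m → m → Lplus k m)
    (hD : D = fun a b =>
      (1 / 2 : k) • (adgen k m ⁅a, b⁆ + ⁅adgen k m a, adgen k m b⁆))
    (IM IL : Submodule k (Lplus k m))
    (hIM : IM = Submodule.span k
      {x : Lplus k m | ∃ a b : m, x = adgen k m ⁅a, b⁆ - D a b})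
    (hIL : IL = Submodule.span k
      {x : Lplus k m | ∃ a b : m, x = adgen k m ⁅a, b⁆ + (2 : k) • D a b}) :
    (∀ x ∈ IM, ∀ y : Lplus k m, ⁅y, x⁆ ∈ IM) ∧
    (∀ x ∈ IL, ∀ y : Lplus k m, ⁅y, x⁆ ∈ IL) ∧
    (∀ x ∈ IM, ∀ y ∈ IL, ⁅x, y⁆ = 0) := by
  have hDab : ∀ a b : m, D a b
      = (1 / 2 : k) • (adgen k m ⁅a, b⁆ + ⁅adgen k m a, adgen k m b⁆) := by
    rw [hD]; intro a b; rfl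
  -- `⁅ad x, ad y⁆ = 2 • D x y - ad ⁅x, y⁆`
  have hB : ∀ x y : m, ⁅adgen k m x, adgen k m y⁆
      = (2 : k) • D x y - adgen k m ⁅x, y⁆ := by
    intro x y
    rw [hDab]
    module
  -- `⁅D a b, ad c⁆ = ad ⁅⁅a,b⁆,c⁆`
  have hDad : ∀ a b c : m, ⁅D a b, adgen k m c⁆ = adgen k m ⁅⁅a, b⁆, c⁆ := by
    intro a b c
    have h := adgen_rel2 (k := k) a b c
    rw [hDab, smul_lie, add_lie, add_comm, h, ← two_smul k, smul_smul]
    norm_num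
  -- `⁅ad c, D a b⁆ = ad ⁅c,⁅a,b⁆⁆`
  have hadD : ∀ c a b : m, ⁅adgen k m c, D a b⁆ = adgen k m ⁅c, ⁅a, b⁆⁆ := by
    intro c a b
    have h1 : ⁅adgen k m c, D a b⁆ = -⁅D a b, adgen k m c⁆ := (lie_skew _ _).symm
    have h2 : (⁅c, ⁅a, b⁆⁆ : m) = -⁅⁅a, b⁆, c⁆ := (lie_skew _ _).symm
    rw [h1, hDad, h2, adgen_neg]
  -- antisymmetry of D
  have hanti : ∀ x y : m, D x y = -D y x := by
    intro x y
    have h2 : (⁅y, x⁆ : m) = -⁅x, y⁆ := (lie_skew _ _).symm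
    have h3 : ⁅adgen k m y, adgen k m x⁆ = -⁅adgen k m x, adgen k m y⁆ :=
      (lie_skew _ _).symm
    rw [hDab, hDab, h2, adgen_neg, h3]
    module
  have hDnegl : ∀ x y : m, D (-x) y = -D x y := by
    intro x y
    rw [hDab, hDab, neg_lie, adgen_neg, adgen_neg, neg_lie]
    module
  -- cyclic identity for D
  have hF3 : ∀ x y z : m, D ⁅x, y⁆ z + D ⁅y, z⁆ x + D ⁅z, x⁆ y = 0 := by
    intro x y z
    have sA : adgen k m ⁅⁅x, y⁆, z⁆ + adgen k m ⁅⁅y, z⁆, x⁆ + adgen k m ⁅⁅z, x⁆, y⁆ = 0 := by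
      rw [← adgen_add, ← adgen_add, jac3, adgen_zero]
    have sB : ⁅adgen k m ⁅x, y⁆, adgen k m z⁆ + ⁅adgen k m ⁅y, z⁆, adgen k m x⁆
        + ⁅adgen k m ⁅z, x⁆, adgen k m y⁆ = 0 := by
      have r1 := adgen_rel2 (k := k) x y z
      have r2 := adgen_rel2 (k := k) y z x
      have r3 := adgen_rel2 (k := k) z x y
      have jj := jac3 (adgen k m x) (adgen k m y) (adgen k m z)
      have e : ⁅adgen k m ⁅x, y⁆, adgen k m z⁆ + ⁅adgen k m ⁅y, z⁆, adgen k m x⁆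
          + ⁅adgen k m ⁅z, x⁆, adgen k m y⁆
          = ((adgen k m ⁅⁅x, y⁆, z⁆ + adgen k m ⁅⁅x, y⁆, z⁆)
            + (adgen k m ⁅⁅y, z⁆, x⁆ + adgen k m ⁅⁅y, z⁆, x⁆)
            + (adgen k m ⁅⁅z, x⁆, y⁆ + adgen k m ⁅⁅z, x⁆, y⁆))
            - (⁅⁅adgen k m x, adgen k m y⁆, adgen k m z⁆
              + ⁅⁅adgen k m y, adgen k m z⁆, adgen k m x⁆
              + ⁅⁅adgen k m z, adgen k m x⁆, adgen k m y⁆) := by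
        rw [← r1, ← r2, ← r3]; abel
      rw [e, jj, sub_zero]
      have e2 : (adgen k m ⁅⁅x, y⁆, z⁆ + adgen k m ⁅⁅x, y⁆, z⁆)
            + (adgen k m ⁅⁅y, z⁆, x⁆ + adgen k m ⁅⁅y, z⁆, x⁆)
            + (adgen k m ⁅⁅z, x⁆, y⁆ + adgen k m ⁅⁅z, x⁆, y⁆)
          = (adgen k m ⁅⁅x, y⁆, z⁆ + adgen k m ⁅⁅y, z⁆, x⁆ + adgen k m ⁅⁅z, x⁆, y⁆)
            + (adgen k m ⁅⁅x, y⁆, z⁆ + adgen k m ⁅⁅y, z⁆, x⁆ + adgen k m ⁅⁅z, x⁆, y⁆) := by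
        abel
      rw [e2, sA, add_zero]
    have e3 : D ⁅x, y⁆ z + D ⁅y, z⁆ x + D ⁅z, x⁆ y
        = (1 / 2 : k) • ((adgen k m ⁅⁅x, y⁆, z⁆ + adgen k m ⁅⁅y, z⁆, x⁆
            + adgen k m ⁅⁅z, x⁆, y⁆)
          + (⁅adgen k m ⁅x, y⁆, adgen k m z⁆ + ⁅adgen k m ⁅y, z⁆, adgen k m x⁆
            + ⁅adgen k m ⁅z, x⁆, adgen k m y⁆)) := by
      rw [hDab, hDab, hDab]; module
    rw [e3, sA, sB, add_zero, smul_zero]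
  -- the key rearrangement of the cyclic identity
  have hDDv : ∀ u c d : m, D ⁅u, c⁆ d + D c ⁅u, d⁆ = D u ⁅c, d⁆ := by
    intro u c d
    have h := hF3 u c d
    have e1 : D ⁅c, d⁆ u = -D u ⁅c, d⁆ := hanti _ _
    have e2 : D ⁅d, u⁆ c = D c ⁅u, d⁆ := by
      have hdu : (⁅d, u⁆ : m) = -⁅u, d⁆ := (lie_skew _ _).symm
      rw [hdu, hDnegl, hanti ⁅u, d⁆ c, neg_neg]
    rw [e1, e2] at h
    calc D ⁅u, c⁆ d + D c ⁅u, d⁆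
        = (D ⁅u, c⁆ d + -D u ⁅c, d⁆ + D c ⁅u, d⁆) + D u ⁅c, d⁆ := by abel
      _ = 0 + D u ⁅c, d⁆ := by rw [h]
      _ = D u ⁅c, d⁆ := zero_add _
  -- bracket of two D's
  have hDD : ∀ a b c d : m, ⁅D a b, D c d⁆ = D ⁅a, b⁆ ⁅c, d⁆ := by
    intro a b c d
    have hmm : adgen k m ⁅⁅⁅a, b⁆, c⁆, d⁆ + adgen k m ⁅c, ⁅⁅a, b⁆, d⁆⁆
        = adgen k m ⁅⁅a, b⁆, ⁅c, d⁆⁆ := by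
      rw [← adgen_add, ← leibniz_lie]
    rw [hDab c d, lie_smul, lie_add, hDad a b ⁅c, d⁆,
      leibniz_lie (D a b) (adgen k m c) (adgen k m d), hDad a b c,
      hDad a b d, hB ⁅⁅a, b⁆, c⁆ d, hB c ⁅⁅a, b⁆, d⁆, ← hDDv ⁅a, b⁆ c d, ← hmm]
    module
  -- the generators of the two spans commute
  have hML : ∀ a b c d : m,
      ⁅adgen k m ⁅a, b⁆ - D a b, adgen k m ⁅c, d⁆ + (2 : k) • D c d⁆ = 0 := by
    intro a b c d
    rw [sub_lie, lie_add, lie_add, lie_smul, lie_smul, hB ⁅a, b⁆ ⁅c, d⁆,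
      hadD ⁅a, b⁆ c d, hDad a b ⁅c, d⁆, hDD a b c d, ← hDDv ⁅a, b⁆ c d, hDDv ⁅a, b⁆ c d]
    module
  refine ⟨?_, ?_, ?_⟩
  · -- I_M is an ideal
    have hstab : ∀ c : m, ∀ x ∈ IM, ⁅adgen k m c, x⁆ ∈ IM := by
      intro c x hx
      rw [hIM] at hx ⊢
      induction hx using Submodule.span_induction with
      | mem g hg =>
        obtain ⟨a, b, rfl⟩ := hg
        have hc : ⁅adgen k m c, adgen k m ⁅a, b⁆ - D a b⁆
            = (-2 : k) • (adgen k m ⁅c, ⁅a, b⁆⁆ - D c ⁅a, b⁆) := by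
          rw [lie_sub, hB c ⁅a, b⁆, hadD c a b]
          module
        rw [hc]
        exact Submodule.smul_mem _ _ (Submodule.subset_span ⟨c, ⁅a, b⁆, rfl⟩)
      | zero => rw [lie_zero]; exact zero_mem _
      | add x y hx hy ihx ihy => rw [lie_add]; exact add_mem ihx ihy
      | smul t x hx ih => rw [lie_smul]; exact Submodule.smul_mem _ _ ih
    intro x hx y
    exact lie_mem_of_adgen_stable IM hstab y x hx
  · -- I_L is an ideal
    have hstab : ∀ c : m, ∀ x ∈ IL, ⁅adgen k m c, x⁆ ∈ IL := by
      intro e x hx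
      rw [hIL] at hx ⊢
      induction hx using Submodule.span_induction with
      | mem g hg =>
        obtain ⟨c, d, rfl⟩ := hg
        have hc : ⁅adgen k m e, adgen k m ⁅c, d⁆ + (2 : k) • D c d⁆
            = adgen k m ⁅e, ⁅c, d⁆⁆ + (2 : k) • D e ⁅c, d⁆ := by
          rw [lie_add, lie_smul, hB e ⁅c, d⁆, hadD e c d]
          module
        rw [hc]
        exact Submodule.subset_span ⟨e, ⁅c, d⁆, rfl⟩
      | zero => rw [lie_zero]; exact zero_mem _
      | add x y hx hy ihx ihy => rw [lie_add]; exact add_mem ihx ihy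
      | smul t x hx ih => rw [lie_smul]; exact Submodule.smul_mem _ _ ih
    intro x hx y
    exact lie_mem_of_adgen_stable IL hstab y x hx
  · -- the two ideals commute
    intro x hx y hy
    rw [hIM] at hx
    rw [hIL] at hy
    induction hx using Submodule.span_induction with
    | mem g hg =>
      obtain ⟨a, b, rfl⟩ := hg
      induction hy using Submodule.span_induction with
      | mem g' hg' =>
        obtain ⟨c, d, rfl⟩ := hg'
        exact hML a b c d
      | zero => rw [lie_zero]
      | add u v hu hv ihu ihv => rw [lie_add, ihu, ihv, add_zero]
      | smul t u hu ih => rw [lie_smul, ih, smul_zero]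
    | zero => rw [zero_lie]
    | add u v hu hv ihu ihv => rw [add_lie, ihu, ihv, add_zero]
    | smul t u hu ih => rw [smul_lie, ih, smul_zero]
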